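/- Let n ∈ ℝ³, let V ∈ ℝ be a constant speed, let λ : ℝ → ℝ, and let s, a : ℝ → ℝ³ be differentiable functions satisfying, for all t, s′(t) = V·a(t) and a′(t) = u(t) where u(t) = λ(t)·(a(t) × n). If at some time τ the heading satisfies ⟨a(τ), n⟩ = 0, then for all t: (i) ⟨a(t), u(t)⟩ = 0, so the control is feasible for the nonholonomic model; (ii) ⟨a(t), n⟩ = 0 and ‖a(t)‖ = ‖a(τ)‖, so the heading remains a vector of constant length lying in the plane with normal n; and (iii) ⟨s(t) − s(τ), n⟩ = 0, i.e. the trajectory remains in the plane of avoidance through s(τ) with normal n. -/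

import Mathlib

open scoped RealInnerProductSpace

/-- The cross product on `ℝ³` (as a Euclidean space). -/
noncomputable def cross3 (x y : EuclideanSpace ℝ (Fin 3)) : EuclideanSpace ℝ (Fin 3) :=
  WithLp.toLp 2 ![x 1 * y 2 - x 2 * y 1, x 2 * y 0 - x 0 * y 2, x 0 * y 1 - x 1 * y 0]

lemma inner_cross3_self (x y : EuclideanSpace ℝ (Fin 3)) : ⟪x, cross3 x y⟫ = 0 := by
  simp only [cross3, PiLp.inner_apply, RCLike.inner_apply, conj_trivial, Fin.sum_univ_three]
  show (x 1 * y 2 - x 2 * y 1) * x 0 + (x 2 * y 0 - x 0 * y 2) * x 1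
      + (x 0 * y 1 - x 1 * y 0) * x 2 = 0
  ring

lemma inner_cross3_right (x y : EuclideanSpace ℝ (Fin 3)) : ⟪cross3 x y, y⟫ = 0 := by
  simp only [cross3, PiLp.inner_apply, RCLike.inner_apply, conj_trivial, Fin.sum_univ_three]
  show y 0 * (x 1 * y 2 - x 2 * y 1) + y 1 * (x 2 * y 0 - x 0 * y 2)
      + y 2 * (x 0 * y 1 - x 1 * y 0) = 0
  ring

/-- For the 3D nonholonomic model `s′ = V a`, `a′ = u` with the avoidance
law `u = λ (a × n)`: the control is feasible (`⟨a, u⟩ = 0`), the heading stays in the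
plane with normal `n` with constant length, and the trajectory stays in the plane of
avoidance through `s(τ)`. -/
theorem plane_of_avoidance_invariance
    (n : EuclideanSpace ℝ (Fin 3)) (V : ℝ) (lam : ℝ → ℝ)
    (s a u : ℝ → EuclideanSpace ℝ (Fin 3))
    (hs : ∀ t, HasDerivAt s (V • a t) t)
    (ha : ∀ t, HasDerivAt a (u t) t)
    (hu : ∀ t, u t = lam t • cross3 (a t) n)
    (τ : ℝ) (hτ : ⟪a τ, n⟫ = 0) :
    ∀ t, ⟪a t, u t⟫ = 0 ∧ (⟪a t, n⟫ = 0 ∧ ‖a t‖ = ‖a τ‖) ∧ ⟪s t - s τ, n⟫ = 0 := by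
  have hau : ∀ t, ⟪a t, u t⟫ = 0 := by
    intro t
    rw [hu t, real_inner_smul_right, inner_cross3_self, mul_zero]
  have hun : ∀ t, ⟪u t, n⟫ = 0 := by
    intro t
    rw [hu t, real_inner_smul_left, inner_cross3_right, mul_zero]
  -- f t = ⟪a t, n⟫ has zero derivative
  have hfderiv : ∀ t, HasDerivAt (fun t => ⟪a t, n⟫) 0 t := by
    intro t
    have h := (ha t).inner ℝ (hasDerivAt_const t n)
    simpa [hun t] using h
  have hfconst : ∀ t, ⟪a t, n⟫ = ⟪a τ, n⟫ := by
    intro t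
    exact is_const_of_deriv_eq_zero (fun x => (hfderiv x).differentiableAt)
      (fun x => (hfderiv x).deriv) t τ
  have han : ∀ t, ⟪a t, n⟫ = 0 := fun t => (hfconst t).trans hτ
  -- ‖a t‖² is constant
  have hgderiv : ∀ t, HasDerivAt (fun t => ⟪a t, a t⟫) 0 t := by
    intro t
    have h := (ha t).inner ℝ (ha t)
    have h0 : ⟪u t, a t⟫ = 0 := (real_inner_comm _ _).trans (hau t)
    rw [hau t, h0, add_zero] at h
    exact h
  have hgconst : ∀ t, ⟪a t, a t⟫ = ⟪a τ, a τ⟫ := by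
    intro t
    exact is_const_of_deriv_eq_zero (fun x => (hgderiv x).differentiableAt)
      (fun x => (hgderiv x).deriv) t τ
  have hnorm : ∀ t, ‖a t‖ = ‖a τ‖ := by
    intro t
    have := hgconst t
    rw [real_inner_self_eq_norm_sq, real_inner_self_eq_norm_sq] at this
    nlinarith [norm_nonneg (a t), norm_nonneg (a τ), this]
  -- ⟪s t, n⟫ is constant
  have hhderiv : ∀ t, HasDerivAt (fun t => ⟪s t, n⟫) 0 t := by
    intro t
    have h := (hs t).inner ℝ (hasDerivAt_const t n)
    rw [inner_zero_right, real_inner_smul_left, han t, mul_zero, add_zero] at h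
    exact h
  have hhconst : ∀ t, ⟪s t, n⟫ = ⟪s τ, n⟫ := by
    intro t
    exact is_const_of_deriv_eq_zero (fun x => (hhderiv x).differentiableAt)
      (fun x => (hhderiv x).deriv) t τ
  intro t
  refine ⟨hau t, ⟨han t, hnorm t⟩, ?_⟩
  rw [inner_sub_left, hhconst t, sub_self]
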